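/- For any field K, the center of Γ is isomorphic as a K-algebra to the subalgebra R = { f ∈ K[x,y] : f(x,0) is a constant } of the polynomial ring K[x,y] (equivalently, R = K·1 + y·K[x,y]). (In char 2 the isomorphism sends a ↦ x, b ↦ y on the spanning set; in char ≠ 2 it sends a² ↦ x, b² ↦ y.) -/

import Mathlib

set_option synthInstance.maxHeartbeats 1000000
set_option maxHeartbeats 1000000
set_option maxRecDepth 10000

variable (K : Type*) [Field K]

/-- Relations defining `Γ = KQ/(ab + ba, bc)` (the Koszul dual situation):
generators `e = ι 0`, `a = ι 1`, `b = ι 2`, `c = ι 3`, with the path algebra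
relations for the quiver with two vertices, loops `a, b` at vertex 1 and an
arrow `c`, together with `ab + ba = 0` and `bc = 0`. -/
inductive Grel : FreeAlgebra K (Fin 4) → FreeAlgebra K (Fin 4) → Prop
  | ee : Grel (FreeAlgebra.ι K 0 * FreeAlgebra.ι K 0) (FreeAlgebra.ι K 0)
  | ea : Grel (FreeAlgebra.ι K 0 * FreeAlgebra.ι K 1) (FreeAlgebra.ι K 1)
  | ae : Grel (FreeAlgebra.ι K 1 * FreeAlgebra.ι K 0) (FreeAlgebra.ι K 1)
  | eb : Grel (FreeAlgebra.ι K 0 * FreeAlgebra.ι K 2) (FreeAlgebra.ι K 2)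
  | be : Grel (FreeAlgebra.ι K 2 * FreeAlgebra.ι K 0) (FreeAlgebra.ι K 2)
  | ec : Grel (FreeAlgebra.ι K 0 * FreeAlgebra.ι K 3) (FreeAlgebra.ι K 3)
  | ce : Grel (FreeAlgebra.ι K 3 * FreeAlgebra.ι K 0) 0
  | abba : Grel (FreeAlgebra.ι K 1 * FreeAlgebra.ι K 2 + FreeAlgebra.ι K 2 * FreeAlgebra.ι K 1) 0
  | bc : Grel (FreeAlgebra.ι K 2 * FreeAlgebra.ι K 3) 0

/-- The algebra `Γ` (whose center computes `Z_gr(E(𝒜)) ≅ HH*(𝒜)/𝒩`). -/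
abbrev Galg := RingQuot (Grel K)

noncomputable def eG : Galg K := RingQuot.mkAlgHom K (Grel K) (FreeAlgebra.ι K 0)
noncomputable def aG : Galg K := RingQuot.mkAlgHom K (Grel K) (FreeAlgebra.ι K 1)
noncomputable def bG : Galg K := RingQuot.mkAlgHom K (Grel K) (FreeAlgebra.ι K 2)
noncomputable def cG : Galg K := RingQuot.mkAlgHom K (Grel K) (FreeAlgebra.ι K 3)

/-- The substitution `y ↦ 0` on `K[x,y]` (with `x = X 0`, `y = X 1`). -/
noncomputable def substY0 : MvPolynomial (Fin 2) K →ₐ[K] MvPolynomial (Fin 2) K :=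
  MvPolynomial.aeval (fun i => if i = 0 then MvPolynomial.X 0 else 0)

/-- The subalgebra `R = { f ∈ K[x,y] : f(x,0) is a constant } = K·1 + y·K[x,y]`
of the polynomial ring `K[x,y]`. -/
noncomputable def Rsub : Subalgebra K (MvPolynomial (Fin 2) K) :=
  Subalgebra.comap (substY0 K) ⊥

namespace CenterProof

open MvPolynomial

variable {K : Type*} [Field K]

local notation "P" => MvPolynomial (Fin 2) K
local notation "W" => (MvPolynomial (Fin 2) K × MvPolynomial (Fin 2) K × K)

noncomputable def sA : MvPolynomial (Fin 2) K →ₐ[K] MvPolynomial (Fin 2) K :=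
  aeval ![-X 0, X 1]
noncomputable def tA : MvPolynomial (Fin 2) K →ₐ[K] MvPolynomial (Fin 2) K :=
  aeval ![X 0, -X 1]

@[simp] lemma sA_X0 : sA (X 0 : P) = -X 0 := by simp [sA]
@[simp] lemma sA_X1 : sA (X 1 : P) = X 1 := by simp [sA]
@[simp] lemma tA_X0 : tA (X 0 : P) = X 0 := by simp [tA]
@[simp] lemma tA_X1 : tA (X 1 : P) = -X 1 := by simp [tA]
@[simp] lemma sY_X0 : substY0 K (X 0 : P) = X 0 := by simp [substY0]
@[simp] lemma sY_X1 : substY0 K (X 1 : P) = 0 := by simp [substY0]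

noncomputable def Eop : Module.End K W where
  toFun w := (w.1, w.2.1, 0)
  map_add' x y := by simp [Prod.ext_iff]
  map_smul' r x := by simp [Prod.ext_iff]

noncomputable def Aop : Module.End K W where
  toFun w := (X 0 * w.1, X 0 * w.2.1, 0)
  map_add' x y := by simp [Prod.ext_iff, mul_add]
  map_smul' r x := by simp [Prod.ext_iff, mul_smul_comm]

noncomputable def Bop : Module.End K W where
  toFun w := (X 1 * sA w.1, 0, 0)
  map_add' x y := by simp [Prod.ext_iff, mul_add]
  map_smul' r x := by simp [Prod.ext_iff, mul_smul_comm]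

noncomputable def Cop : Module.End K W where
  toFun w := (0, algebraMap K (MvPolynomial (Fin 2) K) w.2.2, 0)
  map_add' x y := by simp [Prod.ext_iff]
  map_smul' r x := by simp [Prod.ext_iff, Algebra.smul_def, mul_comm]

noncomputable def gens : Fin 4 → Module.End K W := ![Eop, Aop, Bop, Cop]

lemma hrel : ∀ ⦃x y⦄, Grel K x y →
    (FreeAlgebra.lift K (gens (K := K))) x = FreeAlgebra.lift K (gens (K := K)) y := by
  intro x y h
  cases h <;>
    · refine LinearMap.ext fun w => ?_
      simp [gens, Module.End.mul_apply, Eop, Aop, Bop, Cop, Prod.ext_iff, map_mul, mul_add,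
        mul_assoc, mul_left_comm]
      try ring

noncomputable def phi : Galg K →ₐ[K] Module.End K W :=
  RingQuot.liftAlgHom K ⟨FreeAlgebra.lift K (gens (K := K)), hrel⟩

@[simp] lemma phi_e : phi (eG K) = (Eop : Module.End K W) := by
  simp [phi, eG, RingQuot.liftAlgHom_mkAlgHom_apply, gens]
@[simp] lemma phi_a : phi (aG K) = (Aop : Module.End K W) := by
  simp [phi, aG, RingQuot.liftAlgHom_mkAlgHom_apply, gens]
@[simp] lemma phi_b : phi (bG K) = (Bop : Module.End K W) := by
  simp [phi, bG, RingQuot.liftAlgHom_mkAlgHom_apply, gens]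
@[simp] lemma phi_c : phi (cG K) = (Cop : Module.End K W) := by
  simp [phi, cG, RingQuot.liftAlgHom_mkAlgHom_apply, gens]



@[simp] lemma ree : eG K * eG K = eG K := by
  simpa [map_mul, eG] using RingQuot.mkAlgHom_rel K (Grel.ee (K := K))
@[simp] lemma rea : eG K * aG K = aG K := by
  simpa [map_mul, eG, aG] using RingQuot.mkAlgHom_rel K (Grel.ea (K := K))
@[simp] lemma rae : aG K * eG K = aG K := by
  simpa [map_mul, eG, aG] using RingQuot.mkAlgHom_rel K (Grel.ae (K := K))
@[simp] lemma reb : eG K * bG K = bG K := by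
  simpa [map_mul, eG, bG] using RingQuot.mkAlgHom_rel K (Grel.eb (K := K))
@[simp] lemma rbe : bG K * eG K = bG K := by
  simpa [map_mul, eG, bG] using RingQuot.mkAlgHom_rel K (Grel.be (K := K))
@[simp] lemma rec' : eG K * cG K = cG K := by
  simpa [map_mul, eG, cG] using RingQuot.mkAlgHom_rel K (Grel.ec (K := K))
@[simp] lemma rce : cG K * eG K = 0 := by
  simpa [map_mul, eG, cG] using RingQuot.mkAlgHom_rel K (Grel.ce (K := K))
lemma rabba : aG K * bG K + bG K * aG K = 0 := by
  simpa [map_mul, map_add, aG, bG] using RingQuot.mkAlgHom_rel K (Grel.abba (K := K))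
lemma rba : bG K * aG K = (-1 : K) • (aG K * bG K) :=
  Eq.trans (eq_neg_of_add_eq_zero_left (add_comm (aG K * bG K) (bG K * aG K) ▸ rabba))
    (neg_one_smul K (aG K * bG K)).symm
@[simp] lemma rbc : bG K * cG K = 0 := by
  simpa [map_mul, bG, cG] using RingQuot.mkAlgHom_rel K (Grel.bc (K := K))

noncomputable def mono (d : Fin 2 →₀ ℕ) : Galg K := eG K * (aG K ^ (d 0) * bG K ^ (d 1))

lemma e_pow_a (i : ℕ) : eG K * aG K ^ (i + 1) = aG K ^ (i + 1) := by
  rw [pow_succ', ← mul_assoc, rea]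

lemma e_pow_b (j : ℕ) : eG K * bG K ^ (j + 1) = bG K ^ (j + 1) := by
  rw [pow_succ', ← mul_assoc, reb]

lemma e_absorb (i j : ℕ) (h : i ≠ 0 ∨ j ≠ 0) :
    eG K * (aG K ^ i * bG K ^ j) = aG K ^ i * bG K ^ j := by
  rcases i with _ | i
  · rcases j with _ | j
    · simp at h
    · simp only [pow_zero, one_mul]; exact e_pow_b j
  · rw [← mul_assoc, e_pow_a]

lemma b_pow_a (i : ℕ) : bG K * aG K ^ i = ((-1 : K) ^ i) • (aG K ^ i * bG K) := by
  induction i with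
  | zero => simp
  | succ n ih =>
    rw [pow_succ, ← mul_assoc, ih, smul_mul_assoc, mul_assoc, rba, mul_smul_comm, smul_smul,
      ← mul_assoc, ← pow_succ, ← pow_succ]

lemma mono_zero : mono (K := K) 0 = eG K := by simp [mono]

lemma e_mono (d : Fin 2 →₀ ℕ) : eG K * mono d = mono d := by
  rw [mono, ← mul_assoc, ree]

lemma a_mono (d : Fin 2 →₀ ℕ) : aG K * mono d = mono (Finsupp.single 0 1 + d) := by
  have h0 : ((Finsupp.single (0 : Fin 2) 1 + d : Fin 2 →₀ ℕ)) 0 = d 0 + 1 := by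
    simp [Finsupp.add_apply, add_comm]
  have h1 : ((Finsupp.single (0 : Fin 2) 1 + d : Fin 2 →₀ ℕ)) 1 = d 1 := by
    simp [Finsupp.add_apply, Finsupp.single_apply]
  rw [mono, mono, h0, h1, ← mul_assoc, rae, ← mul_assoc, ← pow_succ',
    e_absorb _ _ (Or.inl (Nat.succ_ne_zero _)), pow_succ', mul_assoc]

lemma b_mono (d : Fin 2 →₀ ℕ) :
    bG K * mono d = ((-1 : K) ^ (d 0)) • mono (Finsupp.single 1 1 + d) := by
  have h0 : ((Finsupp.single (1 : Fin 2) 1 + d : Fin 2 →₀ ℕ)) 0 = d 0 := by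
    simp [Finsupp.add_apply, Finsupp.single_apply]
  have h1 : ((Finsupp.single (1 : Fin 2) 1 + d : Fin 2 →₀ ℕ)) 1 = d 1 + 1 := by
    simp [Finsupp.add_apply, add_comm]
  rw [mono, mono, h0, h1, ← mul_assoc, rbe, ← mul_assoc, b_pow_a, smul_mul_assoc,
    e_absorb _ _ (Or.inr (Nat.succ_ne_zero _)), mul_assoc, ← pow_succ']

lemma c_mono (d : Fin 2 →₀ ℕ) : cG K * mono d = 0 := by
  rw [mono, ← mul_assoc, rce, zero_mul]

lemma bpow_c (j : ℕ) : bG K ^ (j + 1) * cG K = 0 := by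
  rw [pow_succ, mul_assoc, rbc, mul_zero]

lemma mono_c {d : Fin 2 →₀ ℕ} (h : d 1 ≠ 0) : mono (K := K) d * cG K = 0 := by
  obtain ⟨j, hj⟩ := Nat.exists_eq_succ_of_ne_zero h
  rw [mono, hj, mul_assoc, mul_assoc, bpow_c, mul_zero, mul_zero]

lemma e_u : eG K * (1 - eG K) = 0 := by rw [mul_sub, mul_one, ree, sub_self]
lemma a_u : aG K * (1 - eG K) = 0 := by rw [mul_sub, mul_one, rae, sub_self]
lemma b_u : bG K * (1 - eG K) = 0 := by rw [mul_sub, mul_one, rbe, sub_self]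
lemma c_u : cG K * (1 - eG K) = cG K := by rw [mul_sub, mul_one, rce, sub_zero]

noncomputable def L1 : MvPolynomial (Fin 2) K →ₗ[K] Galg K :=
  Finsupp.linearCombination K mono ∘ₗ (AddMonoidAlgebra.coeffLinearEquiv K).toLinearMap

@[simp] lemma L1_monomial (d : Fin 2 →₀ ℕ) (c : K) :
    L1 (monomial d c) = c • mono d := by
  rw [← single_eq_monomial]
  show Finsupp.linearCombination K mono (Finsupp.single d c) = c • mono d
  exact Finsupp.linearCombination_single K c d

lemma monomial_expandP (d : Fin 2 →₀ ℕ) (c : K) :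
    (monomial d c : MvPolynomial (Fin 2) K) = C c * (X 0 ^ (d 0) * X 1 ^ (d 1)) := by
  rw [monomial_eq]
  congr 1
  rw [Finsupp.prod_fintype _ _ (fun i => pow_zero _)]
  simp [Fin.prod_univ_two]

lemma sA_monomial (d : Fin 2 →₀ ℕ) (c : K) :
    sA (monomial d c : MvPolynomial (Fin 2) K) = ((-1 : K) ^ (d 0)) • monomial d c := by
  have h1 : sA (C c : MvPolynomial (Fin 2) K) = C c := by simp [sA, aeval_C, algebraMap_eq]
  have hC : (C ((-1 : K) ^ (d 0)) : MvPolynomial (Fin 2) K) = (-1) ^ (d 0) := by simp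
  rw [monomial_expandP, map_mul, map_mul, map_pow, map_pow, sA_X0, sA_X1, h1,
    smul_eq_C_mul, hC, neg_pow]
  ring

lemma tA_monomial (d : Fin 2 →₀ ℕ) (c : K) :
    tA (monomial d c : MvPolynomial (Fin 2) K) = ((-1 : K) ^ (d 1)) • monomial d c := by
  have h1 : tA (C c : MvPolynomial (Fin 2) K) = C c := by simp [tA, aeval_C, algebraMap_eq]
  have hC : (C ((-1 : K) ^ (d 1)) : MvPolynomial (Fin 2) K) = (-1) ^ (d 1) := by simp
  rw [monomial_expandP, map_mul, map_mul, map_pow, map_pow, tA_X0, tA_X1, h1,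
    smul_eq_C_mul, hC, neg_pow]
  ring

lemma X_mul_monomial (s : Fin 2) (d : Fin 2 →₀ ℕ) (c : K) :
    (X s : MvPolynomial (Fin 2) K) * monomial d c = monomial (Finsupp.single s 1 + d) c := by
  rw [X, monomial_mul, one_mul]

lemma e_L1 (f : MvPolynomial (Fin 2) K) : eG K * L1 f = L1 f := by
  induction f using MvPolynomial.induction_on' with
  | monomial d c => rw [L1_monomial, mul_smul_comm, e_mono]
  | add p q hp hq => rw [map_add, mul_add, hp, hq]

lemma a_L1 (f : MvPolynomial (Fin 2) K) : aG K * L1 f = L1 (X 0 * f) := by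
  induction f using MvPolynomial.induction_on' with
  | monomial d c => rw [L1_monomial, mul_smul_comm, a_mono, X_mul_monomial, L1_monomial]
  | add p q hp hq => rw [map_add, mul_add, hp, hq, mul_add, map_add]

lemma b_L1 (f : MvPolynomial (Fin 2) K) : bG K * L1 f = L1 (X 1 * sA f) := by
  induction f using MvPolynomial.induction_on' with
  | monomial d c =>
    rw [L1_monomial, mul_smul_comm, b_mono, sA_monomial, mul_smul_comm, X_mul_monomial,
      map_smul, L1_monomial, smul_smul, smul_smul, mul_comm]
  | add p q hp hq => rw [map_add, mul_add, hp, hq, map_add, mul_add, map_add]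

lemma c_L1 (f : MvPolynomial (Fin 2) K) : cG K * L1 f = 0 := by
  induction f using MvPolynomial.induction_on' with
  | monomial d c => rw [L1_monomial, mul_smul_comm, c_mono, smul_zero]
  | add p q hp hq => rw [map_add, mul_add, hp, hq, add_zero]

lemma L1_y_c (f : MvPolynomial (Fin 2) K) : L1 (X 1 * f) * cG K = 0 := by
  induction f using MvPolynomial.induction_on' with
  | monomial d c =>
    rw [X_mul_monomial, L1_monomial, smul_mul_assoc, mono_c, smul_zero]
    simp [Finsupp.add_apply]
  | add p q hp hq => rw [mul_add, map_add, add_mul, hp, hq, add_zero]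

lemma L1_C (c : K) : L1 (C c : MvPolynomial (Fin 2) K) = c • eG K := by
  rw [C_apply, L1_monomial, mono_zero]

noncomputable def L (w : MvPolynomial (Fin 2) K × MvPolynomial (Fin 2) K × K) : Galg K :=
  w.2.2 • (1 - eG K) + L1 w.1 + L1 w.2.1 * cG K

lemma L_smul (r : K) (w : MvPolynomial (Fin 2) K × MvPolynomial (Fin 2) K × K) :
    L (r • w) = r • L w := by
  simp [L, smul_add, smul_smul, map_smul, smul_mul_assoc]

lemma L_add (w w' : MvPolynomial (Fin 2) K × MvPolynomial (Fin 2) K × K) :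
    L (w + w') = L w + L w' := by
  simp only [L, Prod.fst_add, Prod.snd_add, map_add, add_mul, add_smul]
  abel

lemma L_E (w : MvPolynomial (Fin 2) K × MvPolynomial (Fin 2) K × K) :
    L (Eop w) = eG K * L w := by
  show L (w.1, w.2.1, 0) = _
  rw [L, L]
  simp only [zero_smul, zero_add, mul_add, mul_smul_comm, e_u, smul_zero, zero_add,
    e_L1, ← mul_assoc]

lemma L_A (w : MvPolynomial (Fin 2) K × MvPolynomial (Fin 2) K × K) :
    L (Aop w) = aG K * L w := by
  show L (X 0 * w.1, X 0 * w.2.1, 0) = _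
  rw [L, L]
  simp only [zero_smul, zero_add, mul_add, mul_smul_comm, a_u, smul_zero, zero_add,
    a_L1, ← mul_assoc]

lemma L_B (w : MvPolynomial (Fin 2) K × MvPolynomial (Fin 2) K × K) :
    L (Bop w) = bG K * L w := by
  show L (X 1 * sA w.1, 0, 0) = _
  rw [L, L]
  simp only [zero_smul, zero_add, map_zero, zero_mul, add_zero, mul_add, mul_smul_comm,
    b_u, smul_zero, zero_add, b_L1, ← mul_assoc, L1_y_c]

lemma L_C (w : MvPolynomial (Fin 2) K × MvPolynomial (Fin 2) K × K) :
    L (Cop w) = cG K * L w := by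
  show L (0, algebraMap K (MvPolynomial (Fin 2) K) w.2.2, 0) = _
  rw [L, L]
  simp only [zero_smul, zero_add, map_zero, zero_mul, add_zero, mul_add, mul_smul_comm,
    c_u, c_L1, zero_add, algebraMap_eq, L1_C, smul_mul_assoc]
  rw [rec', ← mul_assoc, c_L1, zero_mul, add_zero]

lemma L_phi (z : Galg K) :
    ∀ w : MvPolynomial (Fin 2) K × MvPolynomial (Fin 2) K × K, L (phi z w) = z * L w := by
  obtain ⟨x, rfl⟩ := RingQuot.mkAlgHom_surjective K (Grel K) z
  induction x using FreeAlgebra.induction with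
  | grade0 r =>
    intro w
    rw [AlgHom.commutes, AlgHom.commutes, Module.algebraMap_end_apply, L_smul,
      Algebra.smul_def]
  | grade1 i =>
    fin_cases i
    · intro w
      show L (phi (eG K) w) = eG K * L w
      rw [phi_e]
      exact L_E w
    · intro w
      show L (phi (aG K) w) = aG K * L w
      rw [phi_a]
      exact L_A w
    · intro w
      show L (phi (bG K) w) = bG K * L w
      rw [phi_b]
      exact L_B w
    · intro w
      show L (phi (cG K) w) = cG K * L w
      rw [phi_c]
      exact L_C w
  | mul x y hx hy =>
    intro w
    rw [map_mul, map_mul, Module.End.mul_apply, hx, hy, mul_assoc]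
  | add x y hx hy =>
    intro w
    rw [map_add, map_add, LinearMap.add_apply, L_add, hx, hy, add_mul]

noncomputable def ev (z : Galg K) : MvPolynomial (Fin 2) K × MvPolynomial (Fin 2) K × K :=
  phi z ((1 : MvPolynomial (Fin 2) K), (0 : MvPolynomial (Fin 2) K), (1 : K))

lemma L_one : L ((1 : MvPolynomial (Fin 2) K), (0 : MvPolynomial (Fin 2) K), (1 : K)) = 1 := by
  rw [L]
  simp only [map_zero, zero_mul, add_zero, one_smul]
  rw [show (1 : MvPolynomial (Fin 2) K) = C 1 from (map_one C).symm, L1_C, one_smul,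
    sub_add_cancel]

lemma L_ev (z : Galg K) : L (ev z) = z := by
  rw [ev, L_phi, L_one, mul_one]

lemma ev_inj : Function.Injective (ev (K := K)) := by
  intro z w h
  rw [← L_ev z, ← L_ev w, h]

@[simp] lemma Eop_apply (w : MvPolynomial (Fin 2) K × MvPolynomial (Fin 2) K × K) :
    Eop w = (w.1, w.2.1, 0) := rfl
@[simp] lemma Aop_apply (w : MvPolynomial (Fin 2) K × MvPolynomial (Fin 2) K × K) :
    Aop w = (X 0 * w.1, X 0 * w.2.1, 0) := rfl
@[simp] lemma Bop_apply (w : MvPolynomial (Fin 2) K × MvPolynomial (Fin 2) K × K) :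
    Bop w = (X 1 * sA w.1, 0, 0) := rfl
@[simp] lemma Cop_apply (w : MvPolynomial (Fin 2) K × MvPolynomial (Fin 2) K × K) :
    Cop w = (0, algebraMap K (MvPolynomial (Fin 2) K) w.2.2, 0) := rfl

lemma Bpow_even {f : MvPolynomial (Fin 2) K} (hf : sA f = f) (j : ℕ)
    (g : MvPolynomial (Fin 2) K) (c : K) :
    (Bop ^ (j + 1)) (f, g, c) = (X 1 ^ (j + 1) * f, 0, 0) := by
  induction j with
  | zero => simp [pow_one, hf]
  | succ n ih =>
    rw [pow_succ', Module.End.mul_apply, ih, Bop_apply]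
    simp [map_mul, map_pow, hf, mul_assoc, mul_left_comm, pow_succ]

lemma Bpow_odd {f : MvPolynomial (Fin 2) K} (hf : sA f = -f) (j : ℕ)
    (g : MvPolynomial (Fin 2) K) (c : K) :
    (Bop ^ (j + 1)) (f, g, c) = (((-1 : K) ^ (j + 1)) • (X 1 ^ (j + 1) * f), 0, 0) := by
  induction j with
  | zero => simp [pow_one, hf]
  | succ n ih =>
    rw [pow_succ', Module.End.mul_apply, ih, Bop_apply]
    rw [show sA ((-1 : K) ^ (n + 1) • (X 1 ^ (n + 1) * f)) =
        (-1 : K) ^ (n + 1) • (X 1 ^ (n + 1) * -f) by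
      simp [map_smul, map_mul, map_pow, hf, sA_X1]]
    rw [mul_smul_comm, show X 1 * (X 1 ^ (n + 1) * -f) = -(X 1 ^ (n + 1 + 1) * f) by ring,
      smul_neg, ← neg_smul, show -(-1 : K) ^ (n + 1) = (-1 : K) ^ (n + 1 + 1) by ring]

lemma Apow_succ (i : ℕ) (f g : MvPolynomial (Fin 2) K) (c : K) :
    (Aop ^ (i + 1)) (f, g, c) = (X 0 ^ (i + 1) * f, X 0 ^ (i + 1) * g, 0) := by
  induction i with
  | zero => simp [pow_one]
  | succ n ih =>
    rw [pow_succ', Module.End.mul_apply, ih, Aop_apply]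
    simp [pow_succ, mul_assoc, mul_left_comm, mul_comm]

lemma Apow_zero3 (i : ℕ) (f g : MvPolynomial (Fin 2) K) :
    (Aop ^ i) (f, g, (0 : K)) = (X 0 ^ i * f, X 0 ^ i * g, 0) := by
  cases i with
  | zero => simp
  | succ n => exact Apow_succ n f g 0

lemma sY_monomial (d : Fin 2 →₀ ℕ) (c : K) :
    substY0 K (monomial d c : MvPolynomial (Fin 2) K) = C c * (X 0 ^ (d 0) * (0 : MvPolynomial (Fin 2) K) ^ (d 1)) := by
  have h1 : substY0 K (C c : MvPolynomial (Fin 2) K) = C c := by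
    simp [substY0, aeval_C, algebraMap_eq]
  rw [monomial_expandP, map_mul, map_mul, map_pow, map_pow, sY_X0, sY_X1, h1]

lemma phi_mono_even {f' : MvPolynomial (Fin 2) K} (hf' : sA f' = f') (d : Fin 2 →₀ ℕ)
    (g' : MvPolynomial (Fin 2) K) (c' : K) :
    phi (mono d) (f', g', c') =
      ((monomial d 1 : MvPolynomial (Fin 2) K) * f', substY0 K (monomial d 1) * g', 0) := by
  rw [mono, map_mul, map_mul, map_pow, map_pow, phi_e, phi_a, phi_b, Module.End.mul_apply,
    Module.End.mul_apply, sY_monomial, monomial_expandP, C_1, one_mul, one_mul]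
  rcases hj : d 1 with _ | j
  · rcases hi : d 0 with _ | i
    · simp
    · rw [pow_zero, Module.End.one_apply, Apow_succ, Eop_apply]
      simp
  · rw [Bpow_even hf', Apow_zero3, Eop_apply]
    simp [zero_pow, mul_assoc, mul_left_comm]

lemma phi_mono_odd {f' : MvPolynomial (Fin 2) K} (hf' : sA f' = -f') (d : Fin 2 →₀ ℕ)
    (g' : MvPolynomial (Fin 2) K) (c' : K) :
    phi (mono d) (f', g', c') =
      (tA (monomial d 1 : MvPolynomial (Fin 2) K) * f', substY0 K (monomial d 1) * g', 0) := by
  rw [mono, map_mul, map_mul, map_pow, map_pow, phi_e, phi_a, phi_b, Module.End.mul_apply,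
    Module.End.mul_apply, tA_monomial, sY_monomial, monomial_expandP, C_1, one_mul, one_mul]
  rcases hj : d 1 with _ | j
  · rcases hi : d 0 with _ | i
    · simp
    · rw [pow_zero, Module.End.one_apply, Apow_succ, Eop_apply]
      simp
  · rw [Bpow_odd hf', Apow_zero3, Eop_apply]
    simp only [map_smul, smul_mul_assoc, mul_zero, smul_zero, zero_pow, Nat.succ_ne_zero,
      ne_eq, not_false_iff, pow_succ]
    rw [Prod.ext_iff, Prod.ext_iff]
    refine ⟨?_, by simp [zero_pow], rfl⟩
    show X 0 ^ d 0 * (((-1 : K) ^ j * -1) • (X 1 ^ j * X 1 * f')) = _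
    rw [mul_smul_comm]
    exact congrArg (fun t => ((-1 : K) ^ j * -1) • t) (by ring)

lemma phi_L1_even {f' : MvPolynomial (Fin 2) K} (hf' : sA f' = f') (f g' : MvPolynomial (Fin 2) K)
    (c' : K) :
    phi (L1 f) (f', g', c') = (f * f', substY0 K f * g', 0) := by
  induction f using MvPolynomial.induction_on' with
  | monomial d c =>
    rw [L1_monomial, map_smul, LinearMap.smul_apply, phi_mono_even hf',
      show (monomial d c : MvPolynomial (Fin 2) K) = c • monomial d 1 by
        simp [smul_monomial], map_smul]
    simp [Prod.smul_mk, smul_mul_assoc]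
  | add p q hp hq =>
    rw [map_add, map_add, LinearMap.add_apply, hp, hq, map_add]
    simp [add_mul, Prod.ext_iff]

lemma phi_L1_odd {f' : MvPolynomial (Fin 2) K} (hf' : sA f' = -f') (f g' : MvPolynomial (Fin 2) K)
    (c' : K) :
    phi (L1 f) (f', g', c') = (tA f * f', substY0 K f * g', 0) := by
  induction f using MvPolynomial.induction_on' with
  | monomial d c =>
    rw [L1_monomial, map_smul, LinearMap.smul_apply, phi_mono_odd hf',
      show (monomial d c : MvPolynomial (Fin 2) K) = c • monomial d 1 by
        simp [smul_monomial], map_smul, map_smul]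
    simp [Prod.smul_mk, smul_mul_assoc]
  | add p q hp hq =>
    rw [map_add, map_add, LinearMap.add_apply, hp, hq, map_add, map_add]
    simp [add_mul, Prod.ext_iff]

lemma phi_u (w : MvPolynomial (Fin 2) K × MvPolynomial (Fin 2) K × K) :
    phi (1 - eG K) w = (0, 0, w.2.2) := by
  rw [map_sub, map_one, LinearMap.sub_apply, Module.End.one_apply, phi_e, Eop_apply]
  rcases w with ⟨f, g, c⟩
  simp [Prod.ext_iff]

lemma phi_L_even {f' : MvPolynomial (Fin 2) K} (hf' : sA f' = f')
    (f g : MvPolynomial (Fin 2) K) (c : K) (g' : MvPolynomial (Fin 2) K) (c' : K) :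
    phi (L (f, g, c)) (f', g', c') =
      (f * f', substY0 K f * g' + substY0 K g * algebraMap K (MvPolynomial (Fin 2) K) c',
        c * c') := by
  rw [L]
  simp only [map_add, map_smul, map_mul, LinearMap.add_apply, LinearMap.smul_apply,
    Module.End.mul_apply, phi_c, Cop_apply]
  rw [phi_u, phi_L1_even hf', phi_L1_even (by rw [map_zero] : sA (0 : MvPolynomial (Fin 2) K) = 0)]
  simp [Prod.ext_iff, smul_eq_mul, mul_comm]

lemma phi_L_odd {f' : MvPolynomial (Fin 2) K} (hf' : sA f' = -f')
    (f g : MvPolynomial (Fin 2) K) (c : K) (g' : MvPolynomial (Fin 2) K) (c' : K) :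
    phi (L (f, g, c)) (f', g', c') =
      (tA f * f', substY0 K f * g' + substY0 K g * algebraMap K (MvPolynomial (Fin 2) K) c',
        c * c') := by
  rw [L]
  simp only [map_add, map_smul, map_mul, LinearMap.add_apply, LinearMap.smul_apply,
    Module.End.mul_apply, phi_c, Cop_apply]
  rw [phi_u, phi_L1_odd hf',
    phi_L1_even (by rw [map_zero] : sA (0 : MvPolynomial (Fin 2) K) = 0)]
  simp [Prod.ext_iff, smul_eq_mul, mul_comm]

lemma ev_L (f g : MvPolynomial (Fin 2) K) (c : K) :
    ev (L (f, g, c)) = (f, substY0 K g, c) := by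
  rw [ev, phi_L_even (by rw [map_one] : sA (1 : MvPolynomial (Fin 2) K) = 1)]
  simp

lemma sA_zero : sA (0 : MvPolynomial (Fin 2) K) = 0 := map_zero _
lemma sA_one : sA (1 : MvPolynomial (Fin 2) K) = 1 := map_one _
lemma sA_X0' : sA (X 0 : MvPolynomial (Fin 2) K) = -(X 0) := sA_X0

lemma ev_mul (z w : Galg K) : ev (z * w) = phi z (ev w) := by
  rw [ev, ev, map_mul, Module.End.mul_apply]

lemma ev_e : ev (eG K) = (1, 0, 0) := by rw [ev, phi_e]; simp
lemma ev_a : ev (aG K) = (X 0, 0, 0) := by rw [ev, phi_a]; simp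
lemma ev_b : ev (bG K) = (X 1, 0, 0) := by rw [ev, phi_b]; simp [sA_one]
lemma ev_c : ev (cG K) = (0, 1, 0) := by rw [ev, phi_c]; simp

lemma ev_ze (f g : MvPolynomial (Fin 2) K) (c : K) :
    ev (L (f, g, c) * eG K) = (f, 0, 0) := by
  rw [ev_mul, ev_e, phi_L_even sA_one]
  simp

lemma ev_ez (f g : MvPolynomial (Fin 2) K) (c : K) :
    ev (eG K * L (f, g, c)) = (f, substY0 K g, 0) := by
  rw [ev_mul, ev_L, phi_e, Eop_apply]

lemma ev_za (f : MvPolynomial (Fin 2) K) (c : K) :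
    ev (L (f, 0, c) * aG K) = (tA f * X 0, 0, 0) := by
  rw [ev_mul, ev_a, phi_L_odd sA_X0']
  simp

lemma ev_az (f : MvPolynomial (Fin 2) K) (c : K) :
    ev (aG K * L (f, 0, c)) = (X 0 * f, 0, 0) := by
  rw [ev_mul, ev_L, phi_a, Aop_apply]
  simp

lemma ev_zb (f : MvPolynomial (Fin 2) K) (c : K) :
    ev (L (f, 0, c) * bG K) = (f * X 1, 0, 0) := by
  rw [ev_mul, ev_b, phi_L_even sA_X1]
  simp

lemma ev_bz (f : MvPolynomial (Fin 2) K) (c : K) :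
    ev (bG K * L (f, 0, c)) = (X 1 * sA f, 0, 0) := by
  rw [ev_mul, ev_L, phi_b, Bop_apply]

lemma ev_zc (f : MvPolynomial (Fin 2) K) (c : K) :
    ev (L (f, 0, c) * cG K) = (0, substY0 K f, 0) := by
  rw [ev_mul, ev_c, phi_L_even sA_zero]
  simp

lemma ev_cz (f : MvPolynomial (Fin 2) K) (c : K) :
    ev (cG K * L (f, 0, c)) = (0, algebraMap K (MvPolynomial (Fin 2) K) c, 0) := by
  rw [ev_mul, ev_L, phi_c, Cop_apply]

lemma central_of (f : MvPolynomial (Fin 2) K) (c : K) (hs : sA f = f) (ht : tA f = f)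
    (hc : substY0 K f = algebraMap K (MvPolynomial (Fin 2) K) c) :
    L (f, 0, c) ∈ Subalgebra.center K (Galg K) := by
  rw [Subalgebra.mem_center_iff]
  intro z
  obtain ⟨x, rfl⟩ := RingQuot.mkAlgHom_surjective K (Grel K) z
  induction x using FreeAlgebra.induction with
  | grade0 r => rw [AlgHom.commutes]; exact Algebra.commutes r _
  | grade1 i =>
    fin_cases i
    · show eG K * L (f, 0, c) = L (f, 0, c) * eG K
      apply ev_inj
      rw [ev_ze, ev_ez, map_zero]
    · show aG K * L (f, 0, c) = L (f, 0, c) * aG K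
      apply ev_inj
      rw [ev_za, ev_az, ht, mul_comm]
    · show bG K * L (f, 0, c) = L (f, 0, c) * bG K
      apply ev_inj
      rw [ev_zb, ev_bz, hs, mul_comm]
    · show cG K * L (f, 0, c) = L (f, 0, c) * cG K
      apply ev_inj
      rw [ev_zc, ev_cz, hc]
  | mul x y hx hy =>
    rw [map_mul, mul_assoc, hy, ← mul_assoc, hx, mul_assoc]
  | add x y hx hy =>
    rw [map_add, add_mul, hx, hy, mul_add]

lemma center_eq (z : Galg K) (hz : z ∈ Subalgebra.center K (Galg K)) :
    ∃ (f : MvPolynomial (Fin 2) K) (c : K), sA f = f ∧ tA f = f ∧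
      substY0 K f = algebraMap K (MvPolynomial (Fin 2) K) c ∧ z = L (f, 0, c) := by
  rw [Subalgebra.mem_center_iff] at hz
  have hzL : z = L ((ev z).1, (ev z).2.1, (ev z).2.2) := (L_ev z).symm
  set f := (ev z).1 with hf
  set g := (ev z).2.1 with hgdef
  set c := (ev z).2.2 with hcdef
  have hg : g = 0 := by
    have h := congrArg ev (hz (eG K))
    rw [show eG K * z = eG K * L (f, g, c) from by rw [← hzL],
      show z * eG K = L (f, g, c) * eG K from by rw [← hzL], ev_ez, ev_ze] at h
    have h2 := congrArg (fun w => w.2.1) h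
    simp only at h2
    have hgs : substY0 K g = g := by
      have := congrArg (fun w => w.2.1) (ev_L f g c)
      simp only at this
      rw [← hzL] at this
      exact this.symm
    rw [hgs] at h2
    exact h2
  rw [hg] at hzL
  refine ⟨f, c, ?_, ?_, ?_, hzL⟩
  · have h := congrArg ev (hz (bG K))
    rw [show bG K * z = bG K * L (f, 0, c) from by rw [← hzL],
      show z * bG K = L (f, 0, c) * bG K from by rw [← hzL], ev_bz, ev_zb] at h
    have h1 := congrArg (fun w => w.1) h
    simp only at h1
    have := mul_left_cancel₀ (X_ne_zero (1 : Fin 2)) (h1.trans (mul_comm f (X 1)))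
    exact this
  · have h := congrArg ev (hz (aG K))
    rw [show aG K * z = aG K * L (f, 0, c) from by rw [← hzL],
      show z * aG K = L (f, 0, c) * aG K from by rw [← hzL], ev_az, ev_za] at h
    have h1 := congrArg (fun w => w.1) h
    simp only at h1
    exact mul_right_cancel₀ (X_ne_zero (0 : Fin 2)) ((mul_comm (X 0) f ▸ h1).symm)
  · have h := congrArg ev (hz (cG K))
    rw [show cG K * z = cG K * L (f, 0, c) from by rw [← hzL],
      show z * cG K = L (f, 0, c) * cG K from by rw [← hzL], ev_cz, ev_zc] at h
    have h1 := congrArg (fun w => w.2.1) h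
    simp only at h1
    exact h1.symm

noncomputable def Csub : Subalgebra K (MvPolynomial (Fin 2) K) :=
  (AlgHom.equalizer sA (AlgHom.id K (MvPolynomial (Fin 2) K)) ⊓
    AlgHom.equalizer tA (AlgHom.id K (MvPolynomial (Fin 2) K))) ⊓ Rsub K

lemma mem_Csub {f : MvPolynomial (Fin 2) K} :
    f ∈ Csub (K := K) ↔ sA f = f ∧ tA f = f ∧ f ∈ Rsub K := by
  show f ∈ _ ⊓ _ ↔ _
  rw [Algebra.mem_inf, Algebra.mem_inf, AlgHom.mem_equalizer, AlgHom.mem_equalizer, and_assoc]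
  rfl

lemma mem_Rsub {f : MvPolynomial (Fin 2) K} :
    f ∈ Rsub K ↔ ∃ c : K, algebraMap K (MvPolynomial (Fin 2) K) c = substY0 K f := by
  rw [Rsub, Subalgebra.mem_comap, Algebra.mem_bot, Set.mem_range]

noncomputable def Theta : (Subalgebra.center K (Galg K)) →ₐ[K] MvPolynomial (Fin 2) K where
  toFun z := (ev (z : Galg K)).1
  map_one' := by
    show (ev (1 : Galg K)).1 = 1
    rw [ev, map_one, Module.End.one_apply]
  map_mul' z w := by
    obtain ⟨f, c, hs, ht, hc, hz⟩ := center_eq _ z.2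
    obtain ⟨f', c', hs', ht', hc', hw⟩ := center_eq _ w.2
    show (ev ((z : Galg K) * (w : Galg K))).1 = (ev (z : Galg K)).1 * (ev (w : Galg K)).1
    rw [hz, hw, ev_mul, ev_L, map_zero, phi_L_even hs', ev_L, map_zero]
  map_zero' := by
    show (ev (0 : Galg K)).1 = 0
    rw [ev, map_zero, LinearMap.zero_apply]
    rfl
  map_add' z w := by
    show (ev ((z : Galg K) + (w : Galg K))).1 = (ev (z : Galg K)).1 + (ev (w : Galg K)).1
    rw [ev, ev, ev, map_add, LinearMap.add_apply]
    rfl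
  commutes' r := by
    show (ev (algebraMap K (Galg K) r)).1 = algebraMap K (MvPolynomial (Fin 2) K) r
    rw [ev, AlgHom.commutes, Module.algebraMap_end_apply]
    simp [Algebra.smul_def, algebraMap_eq]

lemma Theta_L (f : MvPolynomial (Fin 2) K) (c : K) (h : L (f, 0, c) ∈ Subalgebra.center K (Galg K)) :
    Theta ⟨L (f, 0, c), h⟩ = f := by
  show (ev (L (f, 0, c))).1 = f
  rw [ev_L]

lemma Theta_mem (z : Subalgebra.center K (Galg K)) : Theta z ∈ Csub (K := K) := by
  obtain ⟨f, c, hs, ht, hc, hz⟩ := center_eq _ z.2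
  have : Theta z = f := by
    show (ev (z : Galg K)).1 = f
    rw [hz, ev_L]
  rw [this, mem_Csub]
  exact ⟨hs, ht, mem_Rsub.mpr ⟨c, hc.symm⟩⟩

noncomputable def Theta' : (Subalgebra.center K (Galg K)) →ₐ[K] Csub (K := K) :=
  Theta.codRestrict _ Theta_mem

lemma Theta'_bij : Function.Bijective (Theta' (K := K)) := by
  constructor
  · intro z w h
    obtain ⟨f, c, hs, ht, hc, hz⟩ := center_eq _ z.2
    obtain ⟨f', c', hs', ht', hc', hw⟩ := center_eq _ w.2
    have hzf : Theta z = f := by show (ev (z : Galg K)).1 = f; rw [hz, ev_L]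
    have hwf : Theta w = f' := by show (ev (w : Galg K)).1 = f'; rw [hw, ev_L]
    have hff : f = f' := by
      have := congrArg (Subtype.val) h
      exact hzf.symm.trans (this.trans hwf)
    have hcc : c = c' := by
      apply C_injective (Fin 2) K
      rw [← algebraMap_eq, ← hc, hff, hc', algebraMap_eq]
    apply Subtype.ext
    rw [hz, hw, hff, hcc]
  · rintro ⟨fval, hf⟩
    obtain ⟨hs, ht, hr⟩ := mem_Csub.mp hf
    obtain ⟨c, hc⟩ := mem_Rsub.mp hr
    refine ⟨⟨L (fval, 0, c), central_of fval c hs ht hc.symm⟩, ?_⟩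
    apply Subtype.ext
    show Theta _ = fval
    exact Theta_L fval c _

noncomputable def isoCenterCsub : (Subalgebra.center K (Galg K)) ≃ₐ[K] Csub (K := K) :=
  AlgEquiv.ofBijective Theta' Theta'_bij

lemma oneP_add_one (h2 : (1 : K) + 1 = 0) : (1 : MvPolynomial (Fin 2) K) + 1 = 0 := by
  rw [← C_1, ← C_add, h2, C_0]

lemma neg_X_eq (h2 : (1 : K) + 1 = 0) (i : Fin 2) : -(X i : MvPolynomial (Fin 2) K) = X i := by
  rw [neg_eq_iff_add_eq_zero, show (X i : MvPolynomial (Fin 2) K) + X i = ((1 : MvPolynomial (Fin 2) K) + 1) * X i by ring, oneP_add_one h2, zero_mul]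

lemma sA_eq_id (h2 : (1 : K) + 1 = 0) (f : MvPolynomial (Fin 2) K) : sA f = f := by
  show aeval ![-X 0, X 1] f = f
  rw [show ![-X 0, X 1] = (X : Fin 2 → MvPolynomial (Fin 2) K) from funext fun i => by
    fin_cases i <;> simp [neg_X_eq h2]]
  exact aeval_X_left_apply f

lemma tA_eq_id (h2 : (1 : K) + 1 = 0) (f : MvPolynomial (Fin 2) K) : tA f = f := by
  show aeval ![X 0, -X 1] f = f
  rw [show ![X 0, -X 1] = (X : Fin 2 → MvPolynomial (Fin 2) K) from funext fun i => by
    fin_cases i <;> simp [neg_X_eq h2]]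
  exact aeval_X_left_apply f

lemma Csub_eq (h2 : (1 : K) + 1 = 0) : Csub (K := K) = Rsub K := by
  ext f
  rw [mem_Csub]
  exact ⟨fun h => h.2.2, fun h => ⟨sA_eq_id h2 f, tA_eq_id h2 f, h⟩⟩

noncomputable def Dmap : MvPolynomial (Fin 2) K →ₐ[K] MvPolynomial (Fin 2) K :=
  aeval ![X 0 ^ 2, X 1 ^ 2]

@[simp] lemma D_X0 : Dmap (X 0 : MvPolynomial (Fin 2) K) = X 0 ^ 2 := by simp [Dmap]
@[simp] lemma D_X1 : Dmap (X 1 : MvPolynomial (Fin 2) K) = X 1 ^ 2 := by simp [Dmap]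

lemma D_monomial (d : Fin 2 →₀ ℕ) (c : K) :
    Dmap (monomial d c : MvPolynomial (Fin 2) K) = monomial (2 • d) c := by
  have hC : Dmap (C c : MvPolynomial (Fin 2) K) = C c := by simp [Dmap, aeval_C, algebraMap_eq]
  have h0 : ((2 • d : Fin 2 →₀ ℕ)) 0 = 2 * d 0 := by simp [Finsupp.smul_apply]
  have h1 : ((2 • d : Fin 2 →₀ ℕ)) 1 = 2 * d 1 := by simp [Finsupp.smul_apply]
  rw [monomial_expandP, map_mul, map_mul, map_pow, map_pow, D_X0, D_X1,
    monomial_expandP, h0, h1, pow_mul, pow_mul, hC]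

lemma two_smul_inj {d d' : Fin 2 →₀ ℕ} (h : (2 • d : Fin 2 →₀ ℕ) = 2 • d') : d = d' := by
  ext a
  have := DFunLike.congr_fun h a
  simp only [Finsupp.smul_apply, smul_eq_mul] at this
  omega

lemma D_coeff (d : Fin 2 →₀ ℕ) (f : MvPolynomial (Fin 2) K) :
    coeff (2 • d) (Dmap f) = coeff d f := by
  induction f using MvPolynomial.induction_on' with
  | monomial d' c =>
    rw [D_monomial]
    by_cases h : d' = d
    · subst h; simp [coeff_monomial]
    · rw [coeff_monomial, coeff_monomial, if_neg (fun hh => h (two_smul_inj hh)), if_neg h]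
  | add p q hp hq => rw [map_add, coeff_add, coeff_add, hp, hq]

lemma D_inj : Function.Injective (Dmap (K := K)) := by
  intro f g h
  apply MvPolynomial.ext
  intro d
  rw [← D_coeff d f, ← D_coeff d g, h]

lemma coeff_sA (f : MvPolynomial (Fin 2) K) (d : Fin 2 →₀ ℕ) :
    coeff d (sA f) = (-1 : K) ^ (d 0) * coeff d f := by
  induction f using MvPolynomial.induction_on' with
  | monomial d' c =>
    rw [sA_monomial, coeff_smul]
    by_cases h : d' = d
    · subst h; rfl
    · rw [coeff_monomial, if_neg h, smul_zero, mul_zero]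
  | add p q hp hq => rw [map_add, coeff_add, coeff_add, hp, hq, mul_add]

lemma coeff_tA (f : MvPolynomial (Fin 2) K) (d : Fin 2 →₀ ℕ) :
    coeff d (tA f) = (-1 : K) ^ (d 1) * coeff d f := by
  induction f using MvPolynomial.induction_on' with
  | monomial d' c =>
    rw [tA_monomial, coeff_smul]
    by_cases h : d' = d
    · subst h; rfl
    · rw [coeff_monomial, if_neg h, smul_zero, mul_zero]
  | add p q hp hq => rw [map_add, coeff_add, coeff_add, hp, hq, mul_add]

lemma even_of_fixed (h2 : ¬((1 : K) + 1 = 0)) {f : MvPolynomial (Fin 2) K} {d : Fin 2 →₀ ℕ}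
    (hd : d ∈ f.support) (i : Fin 2)
    (hfix : coeff d f = (-1 : K) ^ (d i) * coeff d f) : Even (d i) := by
  by_contra hodd
  rw [(Nat.not_even_iff_odd.mp hodd).neg_one_pow, neg_one_mul] at hfix
  have : ((1 : K) + 1) * coeff d f = 0 := by
    have := eq_neg_iff_add_eq_zero.mp hfix
    ring_nf
    ring_nf at this
    linear_combination this
  rcases mul_eq_zero.mp this with h | h
  · exact h2 h
  · exact (MvPolynomial.mem_support_iff.mp hd) h

noncomputable def halve (d : Fin 2 →₀ ℕ) : Fin 2 →₀ ℕ :=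
  Finsupp.mapRange (fun n => n / 2) (by norm_num) d

lemma two_smul_halve {d : Fin 2 →₀ ℕ} (h0 : Even (d 0)) (h1 : Even (d 1)) :
    (2 • halve d : Fin 2 →₀ ℕ) = d := by
  ext a
  simp only [Finsupp.smul_apply, halve, Finsupp.mapRange_apply, smul_eq_mul]
  fin_cases a
  · obtain ⟨k, hk⟩ := h0
    show 2 * (d 0 / 2) = d 0
    omega
  · obtain ⟨k, hk⟩ := h1
    show 2 * (d 1 / 2) = d 1
    omega

lemma D_surj (h2 : ¬((1 : K) + 1 = 0)) {f : MvPolynomial (Fin 2) K} (hs : sA f = f)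
    (ht : tA f = f) : ∃ g : MvPolynomial (Fin 2) K, Dmap g = f := by
  refine ⟨∑ d ∈ f.support, monomial (halve d) (coeff d f), ?_⟩
  rw [map_sum]
  rw [Finset.sum_congr rfl (fun d hd => ?_), support_sum_monomial_coeff]
  rw [D_monomial, two_smul_halve]
  · exact even_of_fixed h2 hd 0 (by rw [← coeff_sA, hs])
  · exact even_of_fixed h2 hd 1 (by rw [← coeff_tA, ht])

lemma sA_D (f : MvPolynomial (Fin 2) K) : sA (Dmap f) = Dmap f := by
  have h : (sA (K := K)).comp Dmap = Dmap := by
    apply MvPolynomial.algHom_ext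
    intro i
    fin_cases i <;> simp [AlgHom.comp_apply, map_pow, neg_sq]
  exact DFunLike.congr_fun h f

lemma tA_D (f : MvPolynomial (Fin 2) K) : tA (Dmap f) = Dmap f := by
  have h : (tA (K := K)).comp Dmap = Dmap := by
    apply MvPolynomial.algHom_ext
    intro i
    fin_cases i <;> simp [AlgHom.comp_apply, map_pow, neg_sq]
  exact DFunLike.congr_fun h f

lemma sY_D (f : MvPolynomial (Fin 2) K) : substY0 K (Dmap f) = Dmap (substY0 K f) := by
  have h : (substY0 K).comp Dmap = Dmap.comp (substY0 K) := by
    apply MvPolynomial.algHom_ext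
    intro i
    fin_cases i <;> simp [AlgHom.comp_apply, map_pow, zero_pow]
  exact DFunLike.congr_fun h f

lemma D_mem_Csub {f : MvPolynomial (Fin 2) K} (hf : f ∈ Rsub K) : Dmap f ∈ Csub (K := K) := by
  obtain ⟨c, hc⟩ := mem_Rsub.mp hf
  refine mem_Csub.mpr ⟨sA_D f, tA_D f, mem_Rsub.mpr ⟨c, ?_⟩⟩
  rw [sY_D, ← hc, AlgHom.commutes]

noncomputable def DtoC : (Rsub K) →ₐ[K] Csub (K := K) :=
  (Dmap.comp (Rsub K).val).codRestrict _ (fun x => D_mem_Csub x.2)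

lemma DtoC_bij (h2 : ¬((1 : K) + 1 = 0)) : Function.Bijective (DtoC (K := K)) := by
  constructor
  · intro x y h
    have h' : Dmap (x : MvPolynomial (Fin 2) K) = Dmap (y : MvPolynomial (Fin 2) K) :=
      congrArg Subtype.val h
    exact Subtype.ext (D_inj h')
  · rintro ⟨fval, hf⟩
    obtain ⟨hs, ht, hr⟩ := mem_Csub.mp hf
    obtain ⟨g, hg⟩ := D_surj h2 hs ht
    obtain ⟨c, hc⟩ := mem_Rsub.mp hr
    have hgR : g ∈ Rsub K := by
      refine mem_Rsub.mpr ⟨c, ?_⟩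
      apply D_inj
      rw [← sY_D, hg, ← hc, AlgHom.commutes]
    exact ⟨⟨g, hgR⟩, Subtype.ext hg⟩

noncomputable def isoCD (h2 : ¬((1 : K) + 1 = 0)) : (Rsub K) ≃ₐ[K] Csub (K := K) :=
  AlgEquiv.ofBijective DtoC (DtoC_bij h2)

end CenterProof

/-- For any field `K`, the center of `Γ` is isomorphic as a `K`-algebra to the
subalgebra `R = { f ∈ K[x,y] : f(x,0) is a constant } = K·1 + y·K[x,y]` of the
polynomial ring `K[x,y]`. -/
theorem center_iso_R (K : Type*) [Field K] :
    Nonempty ((Subalgebra.center K (Galg K)) ≃ₐ[K] Rsub K) := by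
  by_cases h2 : (1 : K) + 1 = 0
  · exact ⟨CenterProof.isoCenterCsub.trans (Subalgebra.equivOfEq _ _ (CenterProof.Csub_eq h2))⟩
  · exact ⟨CenterProof.isoCenterCsub.trans (CenterProof.isoCD h2).symm⟩
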